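/- Let X be a bounded real random variable on a probability space, let θ, M, b, v ≥ 0 be reals with |X − θ| ≤ M almost surely, and let A be an event with P(A) ≥ 1 − η for some η ∈ [0,1). If the conditional moments satisfy Var(X | A) ≤ v and |E[X | A] − θ| ≤ b, then Var(X) ≤ v + b² + η·M². -/

import Mathlib

open MeasureTheory ProbabilityTheory

lemma int_sq_shift {Ω : Type*} [MeasurableSpace Ω] {μ : Measure Ω} [IsProbabilityMeasure μ]
    {X : Ω → ℝ} (hX : MemLp X 2 μ) (c : ℝ) :
    ∫ ω, (X ω - c)^2 ∂μ = variance X μ + (∫ ω, X ω ∂μ - c)^2 := by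
  have h1 : Integrable (fun ω => X ω ^ 2) μ := hX.integrable_sq
  have h2 : Integrable X μ := hX.integrable one_le_two
  have key : ∀ ω, (X ω - c)^2 = X ω^2 - (2*c) * X ω + c^2 := by intro ω; ring
  simp_rw [key]
  have hInt1 : Integrable (fun ω => X ω ^ 2 - 2 * c * X ω) μ := h1.sub (h2.const_mul _)
  rw [integral_add hInt1 (integrable_const _),
    integral_sub h1 (h2.const_mul (2 * c)), integral_const_mul, integral_const,
    variance_eq_sub hX]
  simp only [measure_univ, probReal_univ, ENNReal.toReal_one, smul_eq_mul, one_mul]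
  have : μ[X ^ 2] = ∫ ω, X ω ^ 2 ∂μ := rfl
  rw [this]; ring

theorem total_variance_bound
    {Ω : Type*} [MeasureSpace Ω] [IsProbabilityMeasure (ℙ : Measure Ω)]
    (X : Ω → ℝ) (hmeas : Measurable X)
    (θ M b v : ℝ) (hθ : 0 ≤ θ) (hM : 0 ≤ M) (hb : 0 ≤ b) (hv : 0 ≤ v)
    (hbound : ∀ᵐ ω ∂ℙ, |X ω - θ| ≤ M)
    (A : Set Ω) (hA : MeasurableSet A)
    (η : ℝ) (hη0 : 0 ≤ η) (hη1 : η < 1)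
    (hPA : 1 - η ≤ (ℙ A).toReal)
    (hcondVar : variance X (ℙ[|A]) ≤ v)
    (hcondMean : |(∫ ω, X ω ∂(ℙ[|A])) - θ| ≤ b) :
    variance X ℙ ≤ v + b ^ 2 + η * M ^ 2 := by
  -- basic facts
  have hPApos : 0 < (ℙ A).toReal := lt_of_lt_of_le (by linarith) hPA
  have hPAne : ℙ A ≠ 0 := by
    intro h; rw [h] at hPApos; simp at hPApos
  have hPAle1 : (ℙ A).toReal ≤ 1 := by
    simpa using ENNReal.toReal_mono (by simp) (prob_le_one (μ := (ℙ : Measure Ω)) (s := A))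
  haveI : IsProbabilityMeasure (ℙ[|A]) := cond_isProbabilityMeasure hPAne
  -- integrability / MemLp
  have hXb : ∀ᵐ ω ∂ℙ, ‖X ω‖ ≤ M + θ := by
    filter_upwards [hbound] with ω hω
    have := abs_sub_abs_le_abs_sub (X ω) θ
    rw [Real.norm_eq_abs]
    have : |X ω| ≤ |X ω - θ| + |θ| := by
      have := abs_sub_abs_le_abs_sub (X ω) θ; linarith [abs_abs θ, le_abs_self θ]
    calc |X ω| ≤ |X ω - θ| + |θ| := this
    _ ≤ M + θ := by rw [abs_of_nonneg hθ]; linarith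
  have hX2 : MemLp X 2 ℙ := MemLp.of_bound hmeas.aestronglyMeasurable (M + θ) hXb
  have hboundc : ∀ᵐ ω ∂(ℙ[|A]), |X ω - θ| ≤ M :=
    cond_absolutelyContinuous.ae_le hbound
  have hXbc : ∀ᵐ ω ∂(ℙ[|A]), ‖X ω‖ ≤ M + θ := cond_absolutelyContinuous.ae_le hXb
  have hX2c : MemLp X 2 (ℙ[|A]) := MemLp.of_bound hmeas.aestronglyMeasurable (M + θ) hXbc
  -- integrability of (X - θ)^2
  have hsqbound : ∀ᵐ ω ∂ℙ, ‖(X ω - θ)^2‖ ≤ M^2 := by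
    filter_upwards [hbound] with ω hω
    rw [Real.norm_eq_abs, abs_of_nonneg (sq_nonneg _), ← sq_abs]
    exact pow_le_pow_left₀ (abs_nonneg _) hω 2
  have hsqint : Integrable (fun ω => (X ω - θ)^2) ℙ :=
    (integrable_const (M^2)).mono' ((hmeas.sub measurable_const).pow_const 2).aestronglyMeasurable hsqbound
  -- step 1 : variance ≤ ∫ (X - θ)^2
  have step1 : variance X ℙ ≤ ∫ ω, (X ω - θ)^2 ∂ℙ := by
    rw [int_sq_shift hX2 θ]
    nlinarith [sq_nonneg ((∫ ω, X ω ∂ℙ) - θ)]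
  -- split
  have hsplit : ∫ ω, (X ω - θ)^2 ∂ℙ
      = (∫ ω in A, (X ω - θ)^2 ∂ℙ) + ∫ ω in Aᶜ, (X ω - θ)^2 ∂ℙ :=
    (integral_add_compl hA hsqint).symm
  -- conditional part
  have hcondint : ∫ ω, (X ω - θ)^2 ∂(ℙ[|A]) = (ℙ A).toReal⁻¹ * ∫ ω in A, (X ω - θ)^2 ∂ℙ := by
    rw [ProbabilityTheory.cond, integral_smul_measure, ENNReal.toReal_inv, smul_eq_mul]
  have hApart : ∫ ω in A, (X ω - θ)^2 ∂ℙ ≤ v + b^2 := by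
    have h1 : ∫ ω, (X ω - θ)^2 ∂(ℙ[|A]) ≤ v + b^2 := by
      rw [int_sq_shift hX2c θ]
      have h2 : ((∫ ω, X ω ∂(ℙ[|A])) - θ)^2 ≤ b^2 := by
        rw [← sq_abs]
        exact pow_le_pow_left₀ (abs_nonneg _) hcondMean 2
      linarith
    calc ∫ ω in A, (X ω - θ)^2 ∂ℙ
        = (ℙ A).toReal * ((ℙ A).toReal⁻¹ * ∫ ω in A, (X ω - θ)^2 ∂ℙ) := by
          field_simp
      _ ≤ (ℙ A).toReal * (v + b^2) := by
          apply mul_le_mul_of_nonneg_left _ hPApos.le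
          rw [← hcondint]; exact h1
      _ ≤ 1 * (v + b^2) := by
          apply mul_le_mul_of_nonneg_right hPAle1 (by positivity)
      _ = v + b^2 := one_mul _
  -- complement part
  have hcompl : (ℙ Aᶜ).toReal ≤ η := by
    have h1 : ℙ Aᶜ = 1 - ℙ A := by
      rw [measure_compl hA (measure_ne_top _ _), measure_univ]
    have h2 : (ℙ Aᶜ).toReal = 1 - (ℙ A).toReal := by
      rw [h1, ENNReal.toReal_sub_of_le (prob_le_one) (by simp)]
      simp
    linarith [h2, hPA]
  have hCpart : ∫ ω in Aᶜ, (X ω - θ)^2 ∂ℙ ≤ η * M^2 := by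
    have hub : ∫ ω in Aᶜ, (X ω - θ)^2 ∂ℙ ≤ ∫ _ω in Aᶜ, M^2 ∂ℙ := by
      apply integral_mono_ae (hsqint.restrict) (integrable_const _)
      filter_upwards [ae_restrict_of_ae hbound] with ω hω
      rw [← sq_abs]
      exact pow_le_pow_left₀ (abs_nonneg _) hω 2
    have : ∫ _ω in Aᶜ, M^2 ∂ℙ = (ℙ Aᶜ).toReal * M^2 := by
      rw [setIntegral_const, smul_eq_mul, measureReal_def]
    rw [this] at hub
    calc ∫ ω in Aᶜ, (X ω - θ)^2 ∂ℙ ≤ (ℙ Aᶜ).toReal * M^2 := hub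
      _ ≤ η * M^2 := mul_le_mul_of_nonneg_right hcompl (by positivity)
  linarith [step1, hsplit, hApart, hCpart]
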